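/- Let k be a field of characteristic zero, R = k[t], and B = R[x,y,z]. Set F = x(tz+x) − t²y², G = (tz+x)F² + 2tx²yF + x⁵, and P = tyF + x³. Define the R-derivation D on B by D(x) = −2t²FP, D(y) = t(6x²P − G), D(z) = 2x(5t²yP + tF²) + 2tFP. Then D(F) = 0 and D(G) = 0. -/
import Mathlib

open MvPolynomial

/-- For `R = k[t]`, `B = R[x,y,z]` and the explicit homogeneous `R`-derivation `D`,
`D F = 0` and `D G = 0`. Here `x = X 0`, `y = X 1`, `z = X 2`, `t = C Polynomial.X`. -/
theorem stmt_4 {k : Type*} [Field k] [CharZero k]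
    (D : Derivation (Polynomial k) (MvPolynomial (Fin 3) (Polynomial k))
      (MvPolynomial (Fin 3) (Polynomial k)))
    (t F G P : MvPolynomial (Fin 3) (Polynomial k))
    (ht : t = C Polynomial.X)
    (hF : F = X 0 * (t * X 2 + X 0) - t ^ 2 * (X 1) ^ 2)
    (hG : G = (t * X 2 + X 0) * F ^ 2 + 2 * t * (X 0) ^ 2 * X 1 * F + (X 0) ^ 5)
    (hP : P = t * X 1 * F + (X 0) ^ 3)
    (hx : D (X 0) = -2 * t ^ 2 * F * P)
    (hy : D (X 1) = t * (6 * (X 0) ^ 2 * P - G))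
    (hz : D (X 2) = 2 * X 0 * (5 * t ^ 2 * X 1 * P + t * F ^ 2) + 2 * t * F * P) :
    D F = 0 ∧ D G = 0 := by
  have hDt : D t = 0 := by
    rw [ht, ← MvPolynomial.algebraMap_eq]; exact Derivation.map_algebraMap D _
  have hD2 : D 2 = 0 := by
    rw [show (2 : MvPolynomial (Fin 3) (Polynomial k)) = 1 + 1 by norm_num, map_add,
      Derivation.map_one_eq_zero, add_zero]
  have hDF : D F = 0 := by
    rw [hF]
    simp only [map_sub, map_add, Derivation.leibniz, Derivation.leibniz_pow, hDt, hD2, hx, hy, hz,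
      smul_eq_mul]
    rw [hG, hP, hF]
    ring
  have hDG : D G = 0 := by
    rw [hG]
    simp only [map_add, Derivation.leibniz, Derivation.leibniz_pow, hDt, hx, hy, hz, hDF, hD2,
      smul_eq_mul]
    rw [hP, hG, hF]
    ring
  exact ⟨hDF, hDG⟩
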